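/- Under the separable least-squares model assumptions, for every θ = (x, y) with x ∈ Ω and y ∈ ℝ^d, the Jacobian of the residual satisfies ‖J(θ) − J(θ*)‖ ≤ ρ(θ, θ*) = (σ₂‖y*‖ + σ₁)‖x − x*‖ + σ₁‖y − y*‖, where θ* = (x*, y*) and the norm on the left is the ℓ²-operator (spectral) norm. -/

import Mathlib

set_option maxHeartbeats 1000000
set_option synthInstance.maxHeartbeats 400000
set_option linter.unusedVariables false


/-!
STATEMENT 0: Jacobian perturbation bound for separable least squares.

The parameter space `Θ = Ω × ℝ^d` is modelled as `WithLp 2 (EuclideanSpace ℝ (Fin p) ×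
EuclideanSpace ℝ (Fin d))`, so that its norm is the Euclidean (ℓ²) norm of the concatenated
parameter and operator norms of (Fréchet) derivatives of maps on it are ℓ²-operator
(spectral) norms.  The dictionary `A : ℝ^p → ℝ^{N×d}` is modelled as a map into continuous
linear maps between Euclidean spaces, whose operator norm is the spectral norm.
-/

noncomputable section

abbrev EucSp (n : ℕ) : Type := EuclideanSpace ℝ (Fin n)

/-- The concatenated parameter space `θ = (x, y)` with the Euclidean (ℓ²) product norm. -/
abbrev ThetaSpace (p d : ℕ) : Type := WithLp 2 (EucSp p × EucSp d)

/-- Nonlinear component of a concatenated parameter. -/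
def thX {p d : ℕ} (θ : ThetaSpace p d) : EucSp p := (WithLp.equiv 2 (EucSp p × EucSp d) θ).1

/-- Linear component of a concatenated parameter. -/
def thY {p d : ℕ} (θ : ThetaSpace p d) : EucSp d := (WithLp.equiv 2 (EucSp p × EucSp d) θ).2

/-- Concatenation `θ = (x, y)`. -/
def thMk {p d : ℕ} (x : EucSp p) (y : EucSp d) : ThetaSpace p d :=
  (WithLp.equiv 2 (EucSp p × EucSp d)).symm (x, y)

/-- The residual `r(θ) = z − A(x) y` of the separable model. -/
def resid {p d N : ℕ} (A : EucSp p → (EucSp d →L[ℝ] EucSp N)) (z : EucSp N)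
    (θ : ThetaSpace p d) : EucSp N :=
  z - A (thX θ) (thY θ)

section Aux
variable {p d N : ℕ}

def LxCLM (p d : ℕ) : ThetaSpace p d →L[ℝ] EucSp p :=
  (ContinuousLinearMap.fst ℝ (EucSp p) (EucSp d)).comp
    (WithLp.prodContinuousLinearEquiv 2 ℝ (EucSp p) (EucSp d) : ThetaSpace p d →L[ℝ] EucSp p × EucSp d)

def LyCLM (p d : ℕ) : ThetaSpace p d →L[ℝ] EucSp d :=
  (ContinuousLinearMap.snd ℝ (EucSp p) (EucSp d)).comp
    (WithLp.prodContinuousLinearEquiv 2 ℝ (EucSp p) (EucSp d) : ThetaSpace p d →L[ℝ] EucSp p × EucSp d)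

lemma LxCLM_apply (θ : ThetaSpace p d) : LxCLM p d θ = thX θ := rfl
lemma LyCLM_apply (θ : ThetaSpace p d) : LyCLM p d θ = thY θ := rfl

lemma norm_Lx_le (v : ThetaSpace p d) : ‖LxCLM p d v‖ ≤ ‖v‖ := by
  rw [WithLp.prod_norm_eq_of_L2]
  have : LxCLM p d v = v.fst := rfl
  rw [this]
  have h := norm_nonneg v.snd
  nlinarith [Real.sq_sqrt (by positivity : (0:ℝ) ≤ ‖v.fst‖^2 + ‖v.snd‖^2),
    Real.sqrt_nonneg (‖v.fst‖^2 + ‖v.snd‖^2), norm_nonneg v.fst]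

lemma norm_Ly_le (v : ThetaSpace p d) : ‖LyCLM p d v‖ ≤ ‖v‖ := by
  rw [WithLp.prod_norm_eq_of_L2]
  have : LyCLM p d v = v.snd := rfl
  rw [this]
  nlinarith [Real.sq_sqrt (by positivity : (0:ℝ) ≤ ‖v.fst‖^2 + ‖v.snd‖^2),
    Real.sqrt_nonneg (‖v.fst‖^2 + ‖v.snd‖^2), norm_nonneg v.fst, norm_nonneg v.snd]

lemma fderiv_resid (A : EucSp p → (EucSp d →L[ℝ] EucSp N)) (hA : Differentiable ℝ A)
    (z : EucSp N) (x0 : EucSp p) (y0 : EucSp d) :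
    fderiv ℝ (resid A z) (thMk x0 y0)
      = -(((A x0).comp (LyCLM p d)) + (((fderiv ℝ A x0).comp (LxCLM p d)).flip y0)) := by
  have hx0 : thX (thMk x0 y0) = x0 := rfl
  have hy0 : thY (thMk x0 y0) = y0 := rfl
  have hc : DifferentiableAt ℝ (fun θ : ThetaSpace p d => A (thX θ)) (thMk x0 y0) := by
    have : (fun θ : ThetaSpace p d => A (thX θ)) = A ∘ (LxCLM p d) := rfl
    rw [this]
    exact (hA _).comp _ (LxCLM p d).differentiableAt
  have hu : DifferentiableAt ℝ (fun θ : ThetaSpace p d => thY θ) (thMk x0 y0) :=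
    (LyCLM p d).differentiableAt
  have h1 : resid A z = fun θ => z - A (thX θ) (thY θ) := rfl
  letI : ContinuousSMul ℝ (ThetaSpace p d) := inferInstance
  rw [h1, ((hc.clm_apply hu).hasFDerivAt.const_sub z).fderiv, fderiv_clm_apply hc hu]
  congr 1
  · congr 1
    · rw [hx0]
      congr 1
      exact (LyCLM p d).fderiv
    · congr 1
      have : (fun θ : ThetaSpace p d => A (thX θ)) = A ∘ (LxCLM p d) := rfl
      rw [this, fderiv_comp _ (hA _) (LxCLM p d).differentiableAt, (LxCLM p d).fderiv]
      rw [show (LxCLM p d) (thMk x0 y0) = x0 from rfl]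

end Aux

/-- **Jacobian perturbation bound.**  Under the separable least-squares model assumptions,
for every `θ = (x, y)` with `x ∈ Ω`, the Jacobian `J(θ) = D r(θ)` of the residual satisfies
`‖J(θ) − J(θ*)‖ ≤ ρ(θ, θ*) = (σ₂‖y*‖ + σ₁)‖x − x*‖ + σ₁‖y − y*‖`. -/
theorem jacobian_perturbation_bound
    {p d N : ℕ}
    (Ω : Set (EucSp p)) (hΩconv : Convex ℝ Ω) (hΩcomp : IsCompact Ω)
    (A : EucSp p → (EucSp d →L[ℝ] EucSp N)) (hA : ContDiff ℝ 3 A)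
    (σ0 σ1 σ2 σ3 : ℝ)
    (hσ0 : ∀ x ∈ Ω, ‖A x‖ ≤ σ0)
    (hσ1 : ∀ x ∈ Ω, ‖iteratedFDeriv ℝ 1 A x‖ ≤ σ1)
    (hσ2 : ∀ x ∈ Ω, ‖iteratedFDeriv ℝ 2 A x‖ ≤ σ2)
    (hσ3 : ∀ x ∈ Ω, ‖iteratedFDeriv ℝ 3 A x‖ ≤ σ3)
    (xs : EucSp p) (hxs : xs ∈ Ω) (ys : EucSp d) (w : EucSp N)
    (x : EucSp p) (hx : x ∈ Ω) (y : EucSp d) :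
    ‖fderiv ℝ (resid A (A xs ys + w)) (thMk x y)
        - fderiv ℝ (resid A (A xs ys + w)) (thMk xs ys)‖
      ≤ (σ2 * ‖ys‖ + σ1) * ‖x - xs‖ + σ1 * ‖y - ys‖ := by
  letI : NormedAddCommGroup (EucSp p →L[ℝ] EucSp d →L[ℝ] EucSp N) := inferInstance
  letI : NormedSpace ℝ (EucSp p →L[ℝ] EucSp d →L[ℝ] EucSp N) := inferInstance
  have hAdiff : Differentiable ℝ A := hA.differentiable (by norm_num)
  have hA' : ContDiff ℝ 2 (fderiv ℝ A) := hA.fderiv_right (by norm_num)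
  -- translate σ bounds to fderiv bounds
  have hb1 : ∀ u ∈ Ω, ‖fderiv ℝ A u‖ ≤ σ1 := by
    intro u hu
    have := hσ1 u hu
    rwa [← norm_iteratedFDeriv_fderiv, norm_iteratedFDeriv_zero] at this
  have hb2 : ∀ u ∈ Ω, ‖fderiv ℝ (fderiv ℝ A) u‖ ≤ σ2 := by
    intro u hu
    have := hσ2 u hu
    rw [show (2:ℕ) = 1 + 1 from rfl, ← norm_iteratedFDeriv_fderiv,
      ← norm_iteratedFDeriv_fderiv, norm_iteratedFDeriv_zero] at this
    exact this
  have hσ1nn : 0 ≤ σ1 := le_trans (norm_nonneg _) (hb1 xs hxs)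
  have hσ2nn : 0 ≤ σ2 := le_trans (norm_nonneg _) (hb2 xs hxs)
  -- mean value bounds
  have hAx : ‖A x - A xs‖ ≤ σ1 * ‖x - xs‖ :=
    hΩconv.norm_image_sub_le_of_norm_fderiv_le (fun u hu => hAdiff u)
      hb1 hxs hx
  have hA'x : ‖fderiv ℝ A x - fderiv ℝ A xs‖ ≤ σ2 * ‖x - xs‖ :=
    hΩconv.norm_image_sub_le_of_norm_fderiv_le
      (fun u hu => hA'.differentiable (by norm_num) u) hb2 hxs hx
  rw [fderiv_resid A hAdiff _ x y, fderiv_resid A hAdiff _ xs ys]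
  rw [show -(((A x).comp (LyCLM p d)) + (((fderiv ℝ A x).comp (LxCLM p d)).flip y))
      - -(((A xs).comp (LyCLM p d)) + (((fderiv ℝ A xs).comp (LxCLM p d)).flip ys))
      = -((((A x).comp (LyCLM p d)) + (((fderiv ℝ A x).comp (LxCLM p d)).flip y))
        - (((A xs).comp (LyCLM p d)) + (((fderiv ℝ A xs).comp (LxCLM p d)).flip ys))) by abel]
  rw [norm_neg]
  apply ContinuousLinearMap.opNorm_le_bound
  · positivity
  intro v
  have hv : ((((A x).comp (LyCLM p d)) + (((fderiv ℝ A x).comp (LxCLM p d)).flip y))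
        - (((A xs).comp (LyCLM p d)) + (((fderiv ℝ A xs).comp (LxCLM p d)).flip ys))) v
      = (A x - A xs) (LyCLM p d v)
        + ((fderiv ℝ A x - fderiv ℝ A xs) (LxCLM p d v)) ys
        + (fderiv ℝ A x (LxCLM p d v)) (y - ys) := by
    simp only [ContinuousLinearMap.sub_apply, ContinuousLinearMap.add_apply,
      ContinuousLinearMap.comp_apply, ContinuousLinearMap.flip_apply,
      ContinuousLinearMap.map_sub]
    abel
  rw [hv]
  have hLx := norm_Lx_le v
  have hLy := norm_Ly_le v
  have t1 : ‖(A x - A xs) (LyCLM p d v)‖ ≤ σ1 * ‖x - xs‖ * ‖v‖ := by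
    calc ‖(A x - A xs) (LyCLM p d v)‖ ≤ ‖A x - A xs‖ * ‖LyCLM p d v‖ :=
          ContinuousLinearMap.le_opNorm _ _
      _ ≤ (σ1 * ‖x - xs‖) * ‖v‖ :=
          mul_le_mul hAx hLy (norm_nonneg _) (by positivity)
  have t2 : ‖((fderiv ℝ A x - fderiv ℝ A xs) (LxCLM p d v)) ys‖
      ≤ σ2 * ‖x - xs‖ * ‖v‖ * ‖ys‖ := by
    calc ‖((fderiv ℝ A x - fderiv ℝ A xs) (LxCLM p d v)) ys‖
        ≤ ‖(fderiv ℝ A x - fderiv ℝ A xs) (LxCLM p d v)‖ * ‖ys‖ :=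
          ContinuousLinearMap.le_opNorm _ _
      _ ≤ (‖fderiv ℝ A x - fderiv ℝ A xs‖ * ‖LxCLM p d v‖) * ‖ys‖ := by
          gcongr; exact ContinuousLinearMap.le_opNorm _ _
      _ ≤ (σ2 * ‖x - xs‖ * ‖v‖) * ‖ys‖ :=
          mul_le_mul_of_nonneg_right (mul_le_mul hA'x hLx (norm_nonneg _) (by positivity))
            (norm_nonneg _)
  have t3 : ‖(fderiv ℝ A x (LxCLM p d v)) (y - ys)‖ ≤ σ1 * ‖v‖ * ‖y - ys‖ := by
    calc ‖(fderiv ℝ A x (LxCLM p d v)) (y - ys)‖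
        ≤ ‖fderiv ℝ A x (LxCLM p d v)‖ * ‖y - ys‖ := ContinuousLinearMap.le_opNorm _ _
      _ ≤ (‖fderiv ℝ A x‖ * ‖LxCLM p d v‖) * ‖y - ys‖ := by
          gcongr; exact ContinuousLinearMap.le_opNorm _ _
      _ ≤ (σ1 * ‖v‖) * ‖y - ys‖ :=
          mul_le_mul_of_nonneg_right (mul_le_mul (hb1 x hx) hLx (norm_nonneg _) hσ1nn)
            (norm_nonneg _)
  calc ‖(A x - A xs) (LyCLM p d v) + ((fderiv ℝ A x - fderiv ℝ A xs) (LxCLM p d v)) ys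
        + (fderiv ℝ A x (LxCLM p d v)) (y - ys)‖
      ≤ ‖(A x - A xs) (LyCLM p d v) + ((fderiv ℝ A x - fderiv ℝ A xs) (LxCLM p d v)) ys‖
        + ‖(fderiv ℝ A x (LxCLM p d v)) (y - ys)‖ := norm_add_le _ _
    _ ≤ ‖(A x - A xs) (LyCLM p d v)‖ + ‖((fderiv ℝ A x - fderiv ℝ A xs) (LxCLM p d v)) ys‖
        + ‖(fderiv ℝ A x (LxCLM p d v)) (y - ys)‖ := by gcongr; exact norm_add_le _ _
    _ ≤ σ1 * ‖x - xs‖ * ‖v‖ + σ2 * ‖x - xs‖ * ‖v‖ * ‖ys‖ + σ1 * ‖v‖ * ‖y - ys‖ := by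
        gcongr
    _ = ((σ2 * ‖ys‖ + σ1) * ‖x - xs‖ + σ1 * ‖y - ys‖) * ‖v‖ := by ring
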